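/- arXiv:2310.20471 — 3 statements merged into one kernel-verified Lean document; each statement's English description precedes it below -/
import Mathlib

section
/- Square-root Gronwall inequality, contraction form: Let C > 0, b ≥ 0, T > 0, and let ξ : [0,T] → ℝ be differentiable with ξ(t) ≥ 0 for all t ∈ [0,T] and ξ′(t) ≤ −2C·ξ(t) + 2b·√(ξ(t)) for all t ∈ [0,T]. Then √(ξ(t)) ≤ √(ξ(0))·e^{−Ct} + b/C for every t ∈ [0,T]. -/
open Real Set

/-- Linear Gronwall: if φ' + Cφ ≤ K on [0,T], then φ t ≤ (φ 0 - K/C) e^{-Ct} + K/C. -/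
lemma aux_gronwall (C K T : ℝ) (hC : 0 < C)
    (φ φd : ℝ → ℝ)
    (hφ : ∀ t ∈ Set.Icc (0:ℝ) T, HasDerivWithinAt φ (φd t) (Set.Icc 0 T) t)
    (hle : ∀ t ∈ Set.Icc (0:ℝ) T, φd t + C * φ t ≤ K) :
    ∀ t ∈ Set.Icc (0:ℝ) T, φ t ≤ (φ 0 - K / C) * Real.exp (-C * t) + K / C := by
  intro t ht
  set ψ : ℝ → ℝ := fun s => (φ s - K / C) * Real.exp (C * s) with hψ
  have hψd : ∀ s ∈ Set.Icc (0:ℝ) T,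
      HasDerivWithinAt ψ ((φd s + C * φ s - K) * Real.exp (C * s)) (Set.Icc 0 T) s := by
    intro s hs
    have h1 : HasDerivWithinAt (fun u => φ u - K / C) (φd s) (Set.Icc 0 T) s :=
      (hφ s hs).sub_const _
    have h2 : HasDerivWithinAt (fun u => Real.exp (C * u)) (C * Real.exp (C * s))
        (Set.Icc 0 T) s := by
      have := (Real.hasDerivAt_exp (C * s)).comp s ((hasDerivAt_id s).const_mul C)
      exact (this.congr_deriv (by ring)).hasDerivWithinAt
    have h3 := h1.mul h2
    exact h3.congr_deriv (by linear_combination (-Real.exp (C * s)) * div_mul_cancel₀ K hC.ne')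
  have hanti : AntitoneOn ψ (Set.Icc 0 T) := by
    have hconv : Convex ℝ (Set.Icc (0:ℝ) T) := convex_Icc _ _
    apply antitoneOn_of_deriv_nonpos hconv
    · exact fun s hs => (hψd s hs).continuousWithinAt
    · intro s hs
      rw [interior_Icc] at hs
      exact ((hψd s (Ioo_subset_Icc_self hs)).hasDerivAt
        (Icc_mem_nhds hs.1 hs.2)).differentiableAt.differentiableWithinAt
    · intro s hs
      rw [interior_Icc] at hs
      have hd := (hψd s (Ioo_subset_Icc_self hs)).hasDerivAt (Icc_mem_nhds hs.1 hs.2)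
      rw [hd.deriv]
      have hle' := hle s (Ioo_subset_Icc_self hs)
      have hexp : (0:ℝ) < Real.exp (C * s) := Real.exp_pos _
      nlinarith
  have h0 : (0:ℝ) ∈ Set.Icc (0:ℝ) T := ⟨le_refl 0, ht.1.trans ht.2⟩
  have hmono := hanti h0 ht ht.1
  have hψ0 : ψ 0 = φ 0 - K / C := by simp [hψ]
  have hψt : ψ t = (φ t - K / C) * Real.exp (C * t) := rfl
  rw [hψ0, hψt] at hmono
  have key : φ t - K / C ≤ (φ 0 - K / C) * Real.exp (-C * t) := by
    have h := mul_le_mul_of_nonneg_right hmono (Real.exp_pos (-C * t)).le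
    have e : C * t + -C * t = 0 := by ring
    rw [mul_assoc, ← Real.exp_add, e, Real.exp_zero, mul_one] at h
    exact h
  linarith

/-- Square-root Gronwall inequality, contraction form. -/
theorem stmt_1 (C b T : ℝ) (hC : 0 < C) (hb : 0 ≤ b) (hT : 0 < T)
    (ξ ξ' : ℝ → ℝ)
    (hderiv : ∀ t ∈ Set.Icc (0:ℝ) T, HasDerivWithinAt ξ (ξ' t) (Set.Icc 0 T) t)
    (hpos : ∀ t ∈ Set.Icc (0:ℝ) T, 0 ≤ ξ t)
    (hineq : ∀ t ∈ Set.Icc (0:ℝ) T,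
      ξ' t ≤ -2 * C * ξ t + 2 * b * Real.sqrt (ξ t)) :
    ∀ t ∈ Set.Icc (0:ℝ) T,
      Real.sqrt (ξ t) ≤ Real.sqrt (ξ 0) * Real.exp (-C * t) + b / C := by
  intro t ht
  apply le_of_forall_pos_le_add
  intro δ hδ
  set ε : ℝ := (δ / 2) ^ 2 with hε
  have hεpos : 0 < ε := by positivity
  have hsqε : Real.sqrt ε = δ / 2 := by
    rw [hε, Real.sqrt_sq (by positivity)]
  set φ : ℝ → ℝ := fun s => Real.sqrt (ξ s + ε) with hφdef
  set φd : ℝ → ℝ := fun s => ξ' s / (2 * Real.sqrt (ξ s + ε)) with hφd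
  set K : ℝ := b + C * Real.sqrt ε with hK
  have hφderiv : ∀ s ∈ Set.Icc (0:ℝ) T, HasDerivWithinAt φ (φd s) (Set.Icc 0 T) s := by
    intro s hs
    have h1 : HasDerivWithinAt (fun u => ξ u + ε) (ξ' s) (Set.Icc 0 T) s :=
      (hderiv s hs).add_const ε
    have hne : ξ s + ε ≠ 0 := by
      have := hpos s hs; positivity
    exact h1.sqrt hne
  have hbound : ∀ s ∈ Set.Icc (0:ℝ) T, φd s + C * φ s ≤ K := by
    intro s hs
    have hxs := hpos s hs
    have hxε : 0 < ξ s + ε := by positivity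
    have hφpos : 0 < φ s := Real.sqrt_pos.mpr hxε
    have hφsq : φ s ^ 2 = ξ s + ε := Real.sq_sqrt hxε.le
    have hsqle : Real.sqrt (ξ s) ≤ φ s := Real.sqrt_le_sqrt (by linarith)
    have hsqnn : 0 ≤ Real.sqrt (ξ s) := Real.sqrt_nonneg _
    have hεle : Real.sqrt ε ≤ φ s := Real.sqrt_le_sqrt (by linarith)
    have hεnn : 0 ≤ Real.sqrt ε := Real.sqrt_nonneg _
    have hεsq : Real.sqrt ε ^ 2 = ε := Real.sq_sqrt hεpos.le
    have h1 : φd s ≤ (-2 * C * ξ s + 2 * b * Real.sqrt (ξ s)) / (2 * φ s) := by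
      have heq : φd s = ξ' s / (2 * φ s) := rfl
      rw [heq]
      gcongr
      exact hineq s hs
    have h2 : (-2 * C * ξ s + 2 * b * Real.sqrt (ξ s)) / (2 * φ s) + C * φ s
        ≤ b + C * Real.sqrt ε := by
      rw [div_add' _ _ _ (by positivity), div_le_iff₀ (by positivity)]
      nlinarith [mul_le_mul_of_nonneg_left hsqle hb,
        mul_le_mul_of_nonneg_left hεle (by positivity : (0:ℝ) ≤ C * Real.sqrt ε)]
    rw [hK]
    linarith
  have hg := aux_gronwall C K T hC φ φd hφderiv hbound t ht
  have hexp : 0 < Real.exp (-C * t) := Real.exp_pos _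
  have hexple : Real.exp (-C * t) ≤ 1 := by
    apply Real.exp_le_one_iff.mpr
    have := ht.1
    nlinarith
  have ht0 : Real.sqrt (ξ t) ≤ φ t := Real.sqrt_le_sqrt (by linarith [hεpos])
  have h0 : (0:ℝ) ∈ Set.Icc (0:ℝ) T := ⟨le_refl 0, hT.le⟩
  have hξ0nn : 0 ≤ ξ 0 := hpos 0 h0
  have hεnn : 0 ≤ Real.sqrt ε := Real.sqrt_nonneg _
  have hξ0snn : 0 ≤ Real.sqrt (ξ 0) := Real.sqrt_nonneg _
  have hφ0le : φ 0 ≤ Real.sqrt (ξ 0) + Real.sqrt ε := by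
    have hsq : ξ 0 + ε ≤ (Real.sqrt (ξ 0) + Real.sqrt ε) ^ 2 := by
      have e1 : Real.sqrt (ξ 0) ^ 2 = ξ 0 := Real.sq_sqrt hξ0nn
      have e2 : Real.sqrt ε ^ 2 = ε := Real.sq_sqrt hεpos.le
      nlinarith
    calc φ 0 = Real.sqrt (ξ 0 + ε) := rfl
      _ ≤ Real.sqrt ((Real.sqrt (ξ 0) + Real.sqrt ε) ^ 2) := Real.sqrt_le_sqrt hsq
      _ = Real.sqrt (ξ 0) + Real.sqrt ε := Real.sqrt_sq (by positivity)
  have hKC : K / C = b / C + Real.sqrt ε := by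
    rw [hK]; field_simp
  have hKCnn : 0 ≤ K / C := by rw [hKC]; positivity
  calc Real.sqrt (ξ t) ≤ φ t := ht0
    _ ≤ (φ 0 - K / C) * Real.exp (-C * t) + K / C := hg
    _ = φ 0 * Real.exp (-C * t) + K / C * (1 - Real.exp (-C * t)) := by ring
    _ ≤ (Real.sqrt (ξ 0) + Real.sqrt ε) * Real.exp (-C * t) + K / C * 1 := by
        gcongr
        linarith
    _ ≤ Real.sqrt (ξ 0) * Real.exp (-C * t) + b / C + δ := by
        rw [mul_one, hKC, hsqε]
        nlinarith
end

section
/- Square-root Gronwall inequality, expansion form: Let L > 0, b ≥ 0, T > 0, and let ξ : [0,T] → ℝ be differentiable with ξ(t) ≥ 0 for all t ∈ [0,T] and ξ′(t) ≤ 2L·ξ(t) + 2b·√(ξ(t)) for all t ∈ [0,T]. Then √(ξ(t)) ≤ √(ξ(0))·e^{Lt} + (b/L)·(e^{Lt} − 1) for every t ∈ [0,T]. -/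
/-- Square-root Gronwall inequality, expansion form. -/
theorem stmt_3 (L b T : ℝ) (hL : 0 < L) (hb : 0 ≤ b) (hT : 0 < T)
    (ξ ξ' : ℝ → ℝ)
    (hderiv : ∀ t ∈ Set.Icc (0:ℝ) T, HasDerivWithinAt ξ (ξ' t) (Set.Icc 0 T) t)
    (hpos : ∀ t ∈ Set.Icc (0:ℝ) T, 0 ≤ ξ t)
    (hineq : ∀ t ∈ Set.Icc (0:ℝ) T,
      ξ' t ≤ 2 * L * ξ t + 2 * b * Real.sqrt (ξ t)) :
    ∀ t ∈ Set.Icc (0:ℝ) T,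
      Real.sqrt (ξ t) ≤ Real.sqrt (ξ 0) * Real.exp (L * t) +
        (b / L) * (Real.exp (L * t) - 1) := by
  intro t ht
  -- main step: for every ε > 0, √(ξ t) ≤ (√(ξ 0) + ε) e^{Lt} + (b/L)(e^{Lt}-1)
  have key : ∀ ε : ℝ, 0 < ε →
      Real.sqrt (ξ t) ≤ (Real.sqrt (ξ 0) + ε) * Real.exp (L * t) +
        (b / L) * (Real.exp (L * t) - 1) := by
    intro ε hε
    set g : ℝ → ℝ := fun s => Real.sqrt (ξ s + ε ^ 2) with hg
    set g' : ℝ → ℝ := fun s => ξ' s / (2 * Real.sqrt (ξ s + ε ^ 2)) with hg'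
    have hξpos : ∀ s ∈ Set.Icc (0:ℝ) T, 0 < ξ s + ε ^ 2 := fun s hs =>
      add_pos_of_nonneg_of_pos (hpos s hs) (pow_pos hε 2)
    have hgpos : ∀ s ∈ Set.Icc (0:ℝ) T, 0 < g s := fun s hs =>
      Real.sqrt_pos.2 (hξpos s hs)
    have hgd : ∀ s ∈ Set.Icc (0:ℝ) T, HasDerivWithinAt g (g' s) (Set.Icc 0 T) s := by
      intro s hs
      have h1 : HasDerivWithinAt (fun u => ξ u + ε ^ 2) (ξ' s) (Set.Icc 0 T) s :=
        (hderiv s hs).add_const _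
      have h2 := (Real.hasDerivAt_sqrt (ne_of_gt (hξpos s hs))).comp_hasDerivWithinAt s h1
      refine HasDerivWithinAt.congr_deriv (f := g) h2 ?_
      simp [hg', div_eq_mul_inv, mul_comm]
    have hgc : ContinuousOn g (Set.Icc 0 T) := fun s hs =>
      (hgd s hs).continuousWithinAt
    have bound : ∀ s ∈ Set.Ico (0:ℝ) T, g' s ≤ L * g s + b := by
      intro s hs
      have hs' : s ∈ Set.Icc (0:ℝ) T := Set.Ico_subset_Icc_self hs
      have hgp := hgpos s hs'
      have h1 : Real.sqrt (ξ s) ≤ g s :=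
        Real.sqrt_le_sqrt (le_add_of_nonneg_right (sq_nonneg ε))
      have h2 : ξ s ≤ g s ^ 2 := by
        rw [Real.sq_sqrt (hξpos s hs').le]
        exact le_add_of_nonneg_right (sq_nonneg ε)
      have h3 : ξ' s ≤ 2 * L * (g s ^ 2) + 2 * b * g s := by
        refine (hineq s hs').trans (add_le_add ?_ ?_)
        · exact mul_le_mul_of_nonneg_left h2 (by positivity)
        · exact mul_le_mul_of_nonneg_left h1 (by positivity)
      rw [hg', div_le_iff₀ (by positivity)]
      calc ξ' s ≤ 2 * L * (g s ^ 2) + 2 * b * g s := h3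
        _ = (L * g s + b) * (2 * Real.sqrt (ξ s + ε ^ 2)) := by
            have : Real.sqrt (ξ s + ε ^ 2) = g s := rfl
            rw [this]; ring
    have hslope : ∀ s ∈ Set.Ico (0:ℝ) T, ∀ r, g' s < r →
        ∃ᶠ z in nhdsWithin s (Set.Ioi s), (z - s)⁻¹ * (g z - g s) < r := by
      intro s hs r hr
      have hsIci : HasDerivWithinAt g (g' s) (Set.Ici s) s := by
        refine (hgd s (Set.Ico_subset_Icc_self hs)).mono_of_mem_nhdsWithin ?_
        have : Set.Icc s T ∈ nhdsWithin s (Set.Ici s) :=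
          Icc_mem_nhdsGE_of_mem ⟨le_refl s, hs.2⟩
        exact Filter.mem_of_superset this (Set.Icc_subset_Icc hs.1 le_rfl)
      exact hsIci.liminf_right_slope_le hr
    have hg0 : g 0 ≤ Real.sqrt (ξ 0) + ε := by
      have h0 : (0:ℝ) ∈ Set.Icc (0:ℝ) T := ⟨le_rfl, hT.le⟩
      calc g 0 = Real.sqrt (ξ 0 + ε ^ 2) := rfl
        _ ≤ Real.sqrt ((Real.sqrt (ξ 0) + ε) ^ 2) := by
            apply Real.sqrt_le_sqrt
            rw [add_sq, Real.sq_sqrt (hpos 0 h0)]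
            nlinarith [Real.sqrt_nonneg (ξ 0)]
        _ = Real.sqrt (ξ 0) + ε := Real.sqrt_sq (by positivity)
    have main := le_gronwallBound_of_liminf_deriv_right_le hgc hslope hg0 bound t ht
    rw [gronwallBound_of_K_ne_0 hL.ne'] at main
    have hle : Real.sqrt (ξ t) ≤ g t :=
      Real.sqrt_le_sqrt (le_add_of_nonneg_right (sq_nonneg ε))
    simp only [sub_zero] at main
    exact hle.trans main
  -- pass to the limit ε → 0
  refine le_of_forall_pos_le_add ?_
  intro η hη
  have hexp : 0 < Real.exp (L * t) := Real.exp_pos _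
  have := key (η / Real.exp (L * t)) (by positivity)
  calc Real.sqrt (ξ t)
      ≤ (Real.sqrt (ξ 0) + η / Real.exp (L * t)) * Real.exp (L * t) +
        (b / L) * (Real.exp (L * t) - 1) := this
    _ = Real.sqrt (ξ 0) * Real.exp (L * t) + (b / L) * (Real.exp (L * t) - 1) + η := by
        field_simp; ring
end

section
/- Wasserstein-type bound for locally Lipschitz convolutions (Step 2 of Lemma 6.1): Let d ≥ 1, let r ≥ 1 be an integer, and let C′ > 0, M > 0, B > 0. Let f : ℝ^d → ℝ^d satisfy |f(x) − f(y)| ≤ C′·|x − y|·(1 + |x|^{2r−1} + |y|^{2r−1}) for all x, y ∈ ℝ^d. Then there exists a constant K > 0, depending only on C′, r, M and B, such that for every probability measure μ on ℝ^d with ∫ |z|^{4r−2} dμ(z) ≤ M and for all x, a ∈ ℝ^d with |x| ≤ B and |a| ≤ B, one has ∫ |f(x − z) − f(x − a)| dμ(z) ≤ K·(∫ |z − a|² dμ(z))^{1/2}. -/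
open MeasureTheory

/-- Wasserstein-type bound for locally Lipschitz convolutions (Step 2 of Lemma 6.1). -/
theorem stmt_5 (d : ℕ) (hd : 1 ≤ d) (r : ℕ) (hr : 1 ≤ r)
    (C' M B : ℝ) (hC' : 0 < C') (hM : 0 < M) (hB : 0 < B)
    (f : EuclideanSpace ℝ (Fin d) → EuclideanSpace ℝ (Fin d))
    (hf : ∀ x y, ‖f x - f y‖ ≤
      C' * ‖x - y‖ * (1 + ‖x‖ ^ (2 * r - 1) + ‖y‖ ^ (2 * r - 1))) :
    ∃ K > (0:ℝ), ∀ μ : Measure (EuclideanSpace ℝ (Fin d)),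
      IsProbabilityMeasure μ →
      Integrable (fun z => ‖z‖ ^ (4 * r - 2)) μ →
      (∫ z, ‖z‖ ^ (4 * r - 2) ∂μ) ≤ M →
      ∀ x a : EuclideanSpace ℝ (Fin d), ‖x‖ ≤ B → ‖a‖ ≤ B →
        (∫ z, ‖f (x - z) - f (x - a)‖ ∂μ) ≤
          K * Real.sqrt (∫ z, ‖z - a‖ ^ 2 ∂μ) := by
  classical
  set n : ℕ := 2 * r - 1 with hn
  have h2n : 4 * r - 2 = 2 * n := by omega
  have hn1 : 1 ≤ n := by omega
  set c : ℝ := 2 ^ n with hc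
  have hcpos : 0 < c := by positivity
  set A : ℝ := 1 + c * B ^ n + (2 * B) ^ n with hA
  have hApos : 0 < A := by positivity
  set D : ℝ := 2 * A ^ 2 + 2 * c ^ 2 * M with hD
  have hDpos : 0 < D := by positivity
  refine ⟨C' * Real.sqrt D, by positivity, ?_⟩
  intro μ hμ hint hM' x a hx ha
  rw [h2n] at hint hM'
  -- basic pointwise power bound
  have hpow : ∀ (z : EuclideanSpace ℝ (Fin d)) (k : ℕ), k ≤ 2 * n →
      ‖z‖ ^ k ≤ 1 + ‖z‖ ^ (2 * n) := by
    intro z k hk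
    rcases le_or_gt (‖z‖) 1 with h | h
    · have h1 : ‖z‖ ^ k ≤ 1 := pow_le_one₀ (norm_nonneg _) h
      have h2 : (0:ℝ) ≤ ‖z‖ ^ (2 * n) := by positivity
      linarith
    · have h1 : ‖z‖ ^ k ≤ ‖z‖ ^ (2 * n) := pow_le_pow_right₀ h.le hk
      linarith
  set u : EuclideanSpace ℝ (Fin d) → ℝ := fun z => ‖z - a‖ with hu
  set w : EuclideanSpace ℝ (Fin d) → ℝ := fun z => A + c * ‖z‖ ^ n with hw
  have hu_cont : Continuous u := (continuous_id.sub continuous_const).norm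
  have hw_cont : Continuous w :=
    continuous_const.add (continuous_const.mul (continuous_norm.pow n))
  have hw_nonneg : ∀ z, 0 ≤ w z := fun z => by
    have : (0:ℝ) ≤ c * ‖z‖ ^ n := by positivity
    simp only [hw]; linarith
  -- pointwise bounds on squares
  have hu_sq_bound : ∀ z, u z ^ 2 ≤ (2 * B ^ 2 + 2) * (1 + ‖z‖ ^ (2 * n)) := by
    intro z
    have h1 : ‖z - a‖ ≤ ‖z‖ + B := (norm_sub_le z a).trans (by linarith)
    have h2 : ‖z - a‖ ^ 2 ≤ (‖z‖ + B) ^ 2 :=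
      pow_le_pow_left₀ (norm_nonneg _) h1 2
    have h3 : ‖z‖ ^ 2 ≤ 1 + ‖z‖ ^ (2 * n) := hpow z 2 (by omega)
    have h4 : (0:ℝ) ≤ ‖z‖ ^ (2 * n) := by positivity
    have h5 : (0:ℝ) ≤ ‖z‖ := norm_nonneg _
    simp only [hu]
    nlinarith [sq_nonneg (‖z‖ - B)]
  have hw_sq_bound : ∀ z, w z ^ 2 ≤ 2 * A ^ 2 + 2 * c ^ 2 * ‖z‖ ^ (2 * n) := by
    intro z
    have h1 : ‖z‖ ^ (2 * n) = (‖z‖ ^ n) ^ 2 := by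
      rw [← pow_mul, mul_comm]
    simp only [hw]
    rw [h1]
    nlinarith [sq_nonneg (A - c * ‖z‖ ^ n)]
  -- integrability
  have hdom : Integrable (fun z => (2 * B ^ 2 + 2) * (1 + ‖z‖ ^ (2 * n))) μ :=
    ((integrable_const (1:ℝ)).add hint).const_mul _
  have hdom2 : Integrable (fun z => 2 * A ^ 2 + 2 * c ^ 2 * ‖z‖ ^ (2 * n)) μ :=
    (integrable_const _).add (hint.const_mul _)
  have hu_sq_int : Integrable (fun z => u z ^ 2) μ := by
    refine hdom.mono' ((hu_cont.pow 2).aestronglyMeasurable) ?_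
    refine Filter.Eventually.of_forall fun z => ?_
    rw [Real.norm_eq_abs, abs_of_nonneg (by positivity)]
    exact hu_sq_bound z
  have hw_sq_int : Integrable (fun z => w z ^ 2) μ := by
    refine hdom2.mono' ((hw_cont.pow 2).aestronglyMeasurable) ?_
    refine Filter.Eventually.of_forall fun z => ?_
    rw [Real.norm_eq_abs, abs_of_nonneg (by positivity)]
    exact hw_sq_bound z
  have hu2 : MemLp u 2 μ :=
    (memLp_two_iff_integrable_sq hu_cont.aestronglyMeasurable).2 hu_sq_int
  have hw2 : MemLp w 2 μ :=
    (memLp_two_iff_integrable_sq hw_cont.aestronglyMeasurable).2 hw_sq_int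
  have hmul_int : Integrable (fun z => u z * w z) μ := by
    have h12 : (1:ENNReal) / 1 = 1 / 2 + 1 / 2 := by
      rw [ENNReal.add_halves, one_div_one]
    have := hw2.smul (𝕜 := ℝ) (r := 1) hu2
    rw [memLp_one_iff_integrable] at this
    exact this
  -- the key pointwise bound
  have key : ∀ z, ‖f (x - z) - f (x - a)‖ ≤ C' * (u z * w z) := by
    intro z
    have h1 := hf (x - z) (x - a)
    have e : (x - z) - (x - a) = a - z := by abel
    rw [e] at h1
    rw [norm_sub_rev a z] at h1
    refine h1.trans ?_
    have hxz : ‖x - z‖ ≤ 2 * max B ‖z‖ := by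
      have h2 := norm_sub_le x z
      have h3 := le_max_left B ‖z‖
      have h4 := le_max_right B ‖z‖
      linarith
    have hmax : (max B ‖z‖) ^ n ≤ B ^ n + ‖z‖ ^ n := by
      rcases le_total B ‖z‖ with h | h
      · rw [max_eq_right h]
        have : (0:ℝ) ≤ B ^ n := by positivity
        linarith
      · rw [max_eq_left h]
        have : (0:ℝ) ≤ ‖z‖ ^ n := by positivity
        linarith
    have hb1 : ‖x - z‖ ^ n ≤ c * B ^ n + c * ‖z‖ ^ n := by
      calc ‖x - z‖ ^ n ≤ (2 * max B ‖z‖) ^ n :=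
            pow_le_pow_left₀ (norm_nonneg _) hxz n
        _ = c * (max B ‖z‖) ^ n := by rw [mul_pow, hc]
        _ ≤ c * (B ^ n + ‖z‖ ^ n) := by
            exact mul_le_mul_of_nonneg_left hmax hcpos.le
        _ = c * B ^ n + c * ‖z‖ ^ n := by ring
    have hb2 : ‖x - a‖ ^ n ≤ (2 * B) ^ n := by
      refine pow_le_pow_left₀ (norm_nonneg _) ?_ n
      have := norm_sub_le x a
      linarith
    have hfac : 1 + ‖x - z‖ ^ n + ‖x - a‖ ^ n ≤ w z := by
      simp only [hw, hA]; linarith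
    calc C' * ‖z - a‖ * (1 + ‖x - z‖ ^ n + ‖x - a‖ ^ n)
        ≤ C' * ‖z - a‖ * w z := by
          refine mul_le_mul_of_nonneg_left hfac ?_
          positivity
      _ = C' * (u z * w z) := by simp only [hu]; ring
  -- Cauchy-Schwarz
  have hpq : (2:ℝ).HolderConjugate 2 := by
    constructor <;> norm_num
  have hCS := integral_mul_le_Lp_mul_Lq_of_nonneg (μ := μ) hpq
    (Filter.Eventually.of_forall fun z => norm_nonneg (z - a))
    (Filter.Eventually.of_forall hw_nonneg)
    (by simpa using hu2) (by simpa using hw2)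
  simp only [Real.rpow_two] at hCS
  rw [← Real.sqrt_eq_rpow, ← Real.sqrt_eq_rpow] at hCS
  -- bound on ∫ w²
  have hw_int_bound : ∫ z, w z ^ 2 ∂μ ≤ D := by
    have h1 : ∫ z, w z ^ 2 ∂μ ≤ ∫ z, (2 * A ^ 2 + 2 * c ^ 2 * ‖z‖ ^ (2 * n)) ∂μ :=
      integral_mono hw_sq_int hdom2 hw_sq_bound
    have h2 : ∫ z, (2 * A ^ 2 + 2 * c ^ 2 * ‖z‖ ^ (2 * n)) ∂μ
        = 2 * A ^ 2 + 2 * c ^ 2 * ∫ z, ‖z‖ ^ (2 * n) ∂μ := by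
      rw [integral_add (integrable_const _) (hint.const_mul _),
        integral_const, integral_const_mul]
      simp
    rw [h2] at h1
    have h3 : 2 * c ^ 2 * ∫ z, ‖z‖ ^ (2 * n) ∂μ ≤ 2 * c ^ 2 * M :=
      mul_le_mul_of_nonneg_left hM' (by positivity)
    rw [hD]; linarith
  have hsqrtw : Real.sqrt (∫ z, w z ^ 2 ∂μ) ≤ Real.sqrt D :=
    Real.sqrt_le_sqrt hw_int_bound
  -- assemble
  have hchain : (∫ z, ‖f (x - z) - f (x - a)‖ ∂μ) ≤ C' * ∫ z, u z * w z ∂μ := by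
    have h1 : (∫ z, ‖f (x - z) - f (x - a)‖ ∂μ) ≤ ∫ z, C' * (u z * w z) ∂μ :=
      integral_mono_of_nonneg
        (Filter.Eventually.of_forall fun z => norm_nonneg _)
        (hmul_int.const_mul C')
        (Filter.Eventually.of_forall key)
    rwa [integral_const_mul] at h1
  have hsqrt_u_nonneg : 0 ≤ Real.sqrt (∫ z, ‖z - a‖ ^ 2 ∂μ) := Real.sqrt_nonneg _
  calc (∫ z, ‖f (x - z) - f (x - a)‖ ∂μ)
      ≤ C' * ∫ z, u z * w z ∂μ := hchain
    _ ≤ C' * (Real.sqrt (∫ z, ‖z - a‖ ^ 2 ∂μ) * Real.sqrt (∫ z, w z ^ 2 ∂μ)) :=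
        mul_le_mul_of_nonneg_left hCS hC'.le
    _ ≤ C' * (Real.sqrt (∫ z, ‖z - a‖ ^ 2 ∂μ) * Real.sqrt D) := by
        refine mul_le_mul_of_nonneg_left ?_ hC'.le
        exact mul_le_mul_of_nonneg_left hsqrtw hsqrt_u_nonneg
    _ = C' * Real.sqrt D * Real.sqrt (∫ z, ‖z - a‖ ^ 2 ∂μ) := by ring
end
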